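/- Let N be a rooted almost-binary phylogenetic network on X whose maximal zig-zag trail decomposition consists of exactly one W-fence of length 4 together with M-fences of length 2 and N-fences of length 1. Then N has exactly two minimal support networks, and each of them has exactly one reticulation. -/

import Mathlib

open Finset

variable {V : Type} [DecidableEq V] [Fintype V]

/-- The vertex set of the digraph given by the edge set `E`. -/
def verts (E : Finset (V × V)) : Finset V :=
  E.image Prod.fst ∪ E.image Prod.snd

/-- In-degree of `v` in the digraph with edge set `E`. -/
def indeg (E : Finset (V × V)) (v : V) : ℕ :=
  (E.filter fun e => e.2 = v).card

/-- Out-degree of `v` in the digraph with edge set `E`. -/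
def outdeg (E : Finset (V × V)) (v : V) : ℕ :=
  (E.filter fun e => e.1 = v).card

/-- `E` is (the edge set of) a `p`-rooted almost-binary phylogenetic network on `X`:
a finite simple DAG with exactly `p` in-degree-0 vertices, each of out-degree 1 or 2 (the roots),
whose set of in-degree-1, out-degree-0 vertices is `X` (the leaves), and all of whose other
vertices have in-degree and out-degree in `{1, 2}`. -/
structure IsPhyloNet (E : Finset (V × V)) (p : ℕ) (X : Finset V) : Prop where
  acyclic : ∀ v : V, ¬ Relation.TransGen (fun a b => (a, b) ∈ E) v v
  roots_card : ((verts E).filter fun v => indeg E v = 0).card = p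
  root_outdeg : ∀ v ∈ verts E, indeg E v = 0 → outdeg E v = 1 ∨ outdeg E v = 2
  leaves_eq : (verts E).filter (fun v => indeg E v = 1 ∧ outdeg E v = 0) = X
  internal_deg : ∀ v ∈ verts E, indeg E v ≠ 0 → v ∉ X →
    (indeg E v = 1 ∨ indeg E v = 2) ∧ (outdeg E v = 1 ∨ outdeg E v = 2)

/-- Two directed edges share a tail or share a head. -/
def Shares (e f : V × V) : Prop := e.1 = f.1 ∨ e.2 = f.2

/-- `S` is (the edge set of) a zig-zag trail of the digraph `E`: a subgraph with `m ≥ 1`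
edges which can be ordered so that consecutive edges share a head or share a tail. -/
def IsZigzagTrail (E S : Finset (V × V)) : Prop :=
  S ⊆ E ∧ ∃ l : List (V × V), l ≠ [] ∧ l.Nodup ∧ l.toFinset = S ∧ l.Chain' Shares

/-- A maximal zig-zag trail: one that is not a proper subgraph of another zig-zag trail. -/
def IsMaximalZigzagTrail (E S : Finset (V × V)) : Prop :=
  IsZigzagTrail E S ∧ ∀ S', IsZigzagTrail E S' → ¬ S ⊂ S'

/-- The `i`-th edge (0-indexed) of a zig-zag sequence on vertices `f 0, f 1, ...`;
when `down = true` the first edge descends (`f 0 > f 1`), and directions alternate. -/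
def zigEdge (f : ℕ → V) (down : Bool) (i : ℕ) : V × V :=
  if decide (i % 2 = 0) = down then (f i, f (i + 1)) else (f (i + 1), f i)

/-- `S` consists of the `m` distinct edges of the zig-zag sequence on `f 0, ..., f m`. -/
def IsZigzagShape (S : Finset (V × V)) (m : ℕ) (f : ℕ → V) (down : Bool) : Prop :=
  S = (Finset.range m).image (zigEdge f down) ∧
  ∀ i < m, ∀ j < m, zigEdge f down i = zigEdge f down j → i = j

/-- A crown: an even number `m` of edges written cyclically as `v₀ > v₁ < ⋯ < v_m = v₀`. -/
def IsCrown (S : Finset (V × V)) : Prop :=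
  ∃ m f, 1 ≤ m ∧ m % 2 = 0 ∧ f m = f 0 ∧ IsZigzagShape S m f true

/-- An M-fence: a non-crown with an even number `m` of edges,
of the form `v₀ < v₁ > ⋯ > v_m ≠ v₀`. -/
def IsMFence (S : Finset (V × V)) : Prop :=
  ¬ IsCrown S ∧ ∃ m f, 1 ≤ m ∧ m % 2 = 0 ∧ f m ≠ f 0 ∧ IsZigzagShape S m f false

/-- A W-fence: a non-crown with an even number `m` of edges,
of the form `v₀ > v₁ < ⋯ < v_m ≠ v₀`. -/
def IsWFence (S : Finset (V × V)) : Prop :=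
  ¬ IsCrown S ∧ ∃ m f, 1 ≤ m ∧ m % 2 = 0 ∧ f m ≠ f 0 ∧ IsZigzagShape S m f true

/-- An N-fence: a non-crown with an odd number `m` of edges,
of the form `v₀ > v₁ < ⋯ > v_m`. -/
def IsNFence (S : Finset (V × V)) : Prop :=
  ¬ IsCrown S ∧ ∃ m f, m % 2 = 1 ∧ IsZigzagShape S m f true

/-- A support network of `N = (V, E)`: a spanning subgraph that is itself a
`p`-rooted almost-binary phylogenetic network on `X` (identified with its edge set). -/
def IsSupportNet (E S : Finset (V × V)) (p : ℕ) (X : Finset V) : Prop :=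
  S ⊆ E ∧ verts S = verts E ∧ IsPhyloNet S p X

/-- A minimal support network: no support network is a proper subgraph of it. -/
def IsMinimalSupportNet (E S : Finset (V × V)) (p : ℕ) (X : Finset V) : Prop :=
  IsSupportNet E S p X ∧ ∀ S', IsSupportNet E S' p X → ¬ S' ⊂ S

/-- A minimum support network: one with the fewest edges among all support networks. -/
def IsMinimumSupportNet (E S : Finset (V × V)) (p : ℕ) (X : Finset V) : Prop :=
  IsSupportNet E S p X ∧ ∀ S', IsSupportNet E S' p X → S.card ≤ S'.card

/-- `S ⊆ Z` is A-admissible (degrees taken in the ambient network `E`):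
(C1) `S` contains every edge `(u,v)` of `Z` with `outdeg u = 1` or `indeg v = 1`;
(C2) of any two distinct edges of `Z` sharing a tail or a head, `S` contains at least one. -/
def AAdmissible (E Z S : Finset (V × V)) : Prop :=
  S ⊆ Z ∧
  (∀ e ∈ Z, (outdeg E e.1 = 1 ∨ indeg E e.2 = 1) → e ∈ S) ∧
  (∀ e₁ ∈ Z, ∀ e₂ ∈ Z, e₁ ≠ e₂ → Shares e₁ e₂ → e₁ ∈ S ∨ e₂ ∈ S)

/-- A B-admissible subset: an A-admissible subset none of whose proper subsets
is A-admissible. -/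
def BAdmissible (E Z S : Finset (V × V)) : Prop :=
  AAdmissible E Z S ∧ ∀ S', S' ⊂ S → ¬ AAdmissible E Z S'

/-- A C-admissible subset: an A-admissible subset of minimum cardinality. -/
def CAdmissible (E Z S : Finset (V × V)) : Prop :=
  AAdmissible E Z S ∧ ∀ S', AAdmissible E Z S' → S.card ≤ S'.card

/-- One subdivision step: an edge `(u, v)` is replaced by `(u, w), (w, v)` for a fresh
vertex `w`. -/
def SubdivStep (T T' : Finset (V × V)) : Prop :=
  ∃ u w v, (u, v) ∈ T ∧ w ∉ verts T ∧
    T' = insert (u, w) (insert (w, v) (T.erase (u, v)))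

/-- `S` is a subdivision of `T` (zero or more subdivision steps). -/
def IsSubdivisionOf (S T : Finset (V × V)) : Prop :=
  Relation.ReflTransGen SubdivStep T S

/-- A rooted binary phylogenetic tree on `X`: a 1-rooted network on `X` in which every
non-root, non-leaf vertex has in-degree 1 and out-degree 2. -/
def IsBinaryPhyloTree (T : Finset (V × V)) (X : Finset V) : Prop :=
  IsPhyloNet T 1 X ∧
  ∀ v ∈ verts T, indeg T v ≠ 0 → v ∉ X → indeg T v = 1 ∧ outdeg T v = 2

/-- `N = (V, E)` is tree-based: it has a support tree, i.e. a spanning subgraph that is a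
subdivision of some rooted binary phylogenetic tree on `X`. -/
def IsTreeBased (E : Finset (V × V)) (X : Finset V) : Prop :=
  ∃ S T, S ⊆ E ∧ verts S = verts E ∧ IsBinaryPhyloTree T X ∧ IsSubdivisionOf S T

/-- The underlying undirected simple graph of the digraph with edge set `S`. -/
def usym (S : Finset (V × V)) : SimpleGraph V where
  Adj u v := u ≠ v ∧ ((u, v) ∈ S ∨ (v, u) ∈ S)
  symm := ⟨fun _ _ h => ⟨h.1.symm, h.2.symm⟩⟩
  loopless := ⟨fun _ h => h.1 rfl⟩

/-- Two edges of `S` lie in a common block of the underlying undirected graph: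
they are equal or lie on a common cycle. -/
def SameBlock (S : Finset (V × V)) (e f : V × V) : Prop :=
  e = f ∨ ∃ (a : V) (w : (usym S).Walk a a), w.IsCycle ∧
    s(e.1, e.2) ∈ w.edges ∧ s(f.1, f.2) ∈ w.edges

/-- The number of reticulations (in-degree-2 vertices) contained in the block of the
edge `e` of `S`. -/
noncomputable def blockReticCount (S : Finset (V × V)) (e : V × V) : ℕ :=
  Set.ncard {v : V | indeg S v = 2 ∧ ∃ f ∈ S, SameBlock S e f ∧ (f.1 = v ∨ f.2 = v)}

/-- The level of the network with edge set `S`: the maximum number of reticulations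
contained in a block. -/
noncomputable def level (S : Finset (V × V)) : ℕ :=
  S.sup (blockReticCount S)


set_option linter.unusedSectionVars false

lemma mem_verts_iff {E : Finset (V × V)} {v : V} :
    v ∈ verts E ↔ ∃ e ∈ E, e.1 = v ∨ e.2 = v := by
  constructor
  · intro h
    rcases Finset.mem_union.1 h with h | h <;>
      · obtain ⟨e, he, rfl⟩ := Finset.mem_image.1 h
        exact ⟨e, he, by tauto⟩
  · rintro ⟨e, he, rfl | rfl⟩
    · exact Finset.mem_union.2 (Or.inl (Finset.mem_image.2 ⟨e, he, rfl⟩))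
    · exact Finset.mem_union.2 (Or.inr (Finset.mem_image.2 ⟨e, he, rfl⟩))

lemma indeg_le_of_subset {S E : Finset (V × V)} (h : S ⊆ E) (v : V) :
    indeg S v ≤ indeg E v :=
  Finset.card_le_card (Finset.filter_subset_filter _ h)

lemma outdeg_le_of_subset {S E : Finset (V × V)} (h : S ⊆ E) (v : V) :
    outdeg S v ≤ outdeg E v :=
  Finset.card_le_card (Finset.filter_subset_filter _ h)

lemma indeg_pos_of_mem {E : Finset (V × V)} {e : V × V} (he : e ∈ E) :
    0 < indeg E e.2 :=
  Finset.card_pos.2 ⟨e, Finset.mem_filter.2 ⟨he, rfl⟩⟩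

lemma outdeg_pos_of_mem {E : Finset (V × V)} {e : V × V} (he : e ∈ E) :
    0 < outdeg E e.1 :=
  Finset.card_pos.2 ⟨e, Finset.mem_filter.2 ⟨he, rfl⟩⟩

lemma two_le_indeg {E : Finset (V × V)} {e f : V × V} (he : e ∈ E) (hf : f ∈ E)
    (hef : e ≠ f) (h2 : e.2 = f.2) : 2 ≤ indeg E e.2 := by
  rw [show (2:ℕ) = ({e, f} : Finset (V × V)).card by rw [Finset.card_insert_of_notMem (by simp [hef]), Finset.card_singleton]]
  apply Finset.card_le_card
  intro x hx
  simp only [Finset.mem_insert, Finset.mem_singleton] at hx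
  rcases hx with rfl | rfl <;> simp [Finset.mem_filter, he, hf, h2]

lemma two_le_outdeg {E : Finset (V × V)} {e f : V × V} (he : e ∈ E) (hf : f ∈ E)
    (hef : e ≠ f) (h1 : e.1 = f.1) : 2 ≤ outdeg E e.1 := by
  rw [show (2:ℕ) = ({e, f} : Finset (V × V)).card by rw [Finset.card_insert_of_notMem (by simp [hef]), Finset.card_singleton]]
  apply Finset.card_le_card
  intro x hx
  simp only [Finset.mem_insert, Finset.mem_singleton] at hx
  rcases hx with rfl | rfl <;> simp [Finset.mem_filter, he, hf, h1]

lemma indeg_erase_of_head {E : Finset (V × V)} {e : V × V} (he : e ∈ E) :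
    indeg (E.erase e) e.2 = indeg E e.2 - 1 := by
  unfold indeg
  rw [Finset.filter_erase]
  exact Finset.card_erase_of_mem (Finset.mem_filter.2 ⟨he, rfl⟩)

lemma indeg_erase_of_ne {E : Finset (V × V)} {e : V × V} {v : V} (hv : e.2 ≠ v) :
    indeg (E.erase e) v = indeg E v := by
  unfold indeg
  rw [Finset.filter_erase, Finset.erase_eq_of_notMem]
  simp [Finset.mem_filter, hv]

lemma outdeg_erase_of_tail {E : Finset (V × V)} {e : V × V} (he : e ∈ E) :
    outdeg (E.erase e) e.1 = outdeg E e.1 - 1 := by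
  unfold outdeg
  rw [Finset.filter_erase]
  exact Finset.card_erase_of_mem (Finset.mem_filter.2 ⟨he, rfl⟩)

lemma outdeg_erase_of_ne {E : Finset (V × V)} {e : V × V} {v : V} (hv : e.1 ≠ v) :
    outdeg (E.erase e) v = outdeg E v := by
  unfold outdeg
  rw [Finset.filter_erase, Finset.erase_eq_of_notMem]
  simp [Finset.mem_filter, hv]

lemma outdeg_eq_one_unique {E : Finset (V × V)} {e f : V × V} (h : outdeg E e.1 = 1)
    (he : e ∈ E) (hf : f ∈ E) (hff : f.1 = e.1) : f = e := by
  obtain ⟨a, ha⟩ := Finset.card_eq_one.1 h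
  have h1 : e ∈ ({a} : Finset (V × V)) := ha ▸ Finset.mem_filter.2 ⟨he, rfl⟩
  have h2 : f ∈ ({a} : Finset (V × V)) := ha ▸ Finset.mem_filter.2 ⟨hf, hff⟩
  simp only [Finset.mem_singleton] at h1 h2; rw [h1, h2]

lemma indeg_eq_one_unique {E : Finset (V × V)} {e f : V × V} (h : indeg E e.2 = 1)
    (he : e ∈ E) (hf : f ∈ E) (hff : f.2 = e.2) : f = e := by
  obtain ⟨a, ha⟩ := Finset.card_eq_one.1 h
  have h1 : e ∈ ({a} : Finset (V × V)) := ha ▸ Finset.mem_filter.2 ⟨he, rfl⟩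
  have h2 : f ∈ ({a} : Finset (V × V)) := ha ▸ Finset.mem_filter.2 ⟨hf, hff⟩
  simp only [Finset.mem_singleton] at h1 h2; rw [h1, h2]

lemma singleton_trail {E : Finset (V × V)} {e : V × V} (he : e ∈ E) :
    IsZigzagTrail E {e} :=
  ⟨Finset.singleton_subset_iff.2 he, [e], by simp, by simp, by simp, by simp [List.Chain']⟩

lemma pair_trail {E : Finset (V × V)} {e f : V × V} (he : e ∈ E) (hf : f ∈ E)
    (hef : e ≠ f) (hs : Shares e f) : IsZigzagTrail E {e, f} :=
  ⟨by intro x hx; rcases Finset.mem_insert.1 hx with rfl | hx;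
      exact he; exact (Finset.mem_singleton.1 hx) ▸ hf,
   [e, f], by simp, by simp [hef], by simp, by simp [List.Chain', hs]⟩

lemma trail_card_le {E S : Finset (V × V)} (h : IsZigzagTrail E S) : S.card ≤ E.card :=
  Finset.card_le_card h.1

lemma exists_maximal_trail {E S : Finset (V × V)} (h : IsZigzagTrail E S) :
    ∃ T, IsMaximalZigzagTrail E T ∧ S ⊆ T := by
  classical
  suffices H : ∀ n (S : Finset (V × V)), IsZigzagTrail E S → E.card - S.card ≤ n →
      ∃ T, IsMaximalZigzagTrail E T ∧ S ⊆ T by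
    exact H (E.card - S.card) S h le_rfl
  intro n
  induction n with
  | zero =>
    intro S hS hc
    refine ⟨S, ⟨hS, ?_⟩, Finset.Subset.refl S⟩
    intro S' hS' hss
    have h1 : S.card < S'.card := Finset.card_lt_card hss
    have h2 : S'.card ≤ E.card := trail_card_le hS'
    omega
  | succ n ih =>
    intro S hS hc
    by_cases hmax : ∀ S', IsZigzagTrail E S' → ¬ S ⊂ S'
    · exact ⟨S, ⟨hS, hmax⟩, Finset.Subset.refl S⟩
    · push_neg at hmax
      obtain ⟨S', hS', hss⟩ := hmax
      have h1 : S.card < S'.card := Finset.card_lt_card hss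
      have h2 : S'.card ≤ E.card := trail_card_le hS'
      obtain ⟨T, hT, hsub⟩ := ih S' hS' (by omega)
      exact ⟨T, hT, hss.1.trans hsub⟩

lemma zigEdge_true_0 (f : ℕ → V) : zigEdge f true 0 = (f 0, f 1) := rfl
lemma zigEdge_true_1 (f : ℕ → V) : zigEdge f true 1 = (f 2, f 1) := rfl
lemma zigEdge_true_2 (f : ℕ → V) : zigEdge f true 2 = (f 2, f 3) := rfl
lemma zigEdge_true_3 (f : ℕ → V) : zigEdge f true 3 = (f 4, f 3) := rfl
lemma zigEdge_false_0 (f : ℕ → V) : zigEdge f false 0 = (f 1, f 0) := rfl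
lemma zigEdge_false_1 (f : ℕ → V) : zigEdge f false 1 = (f 1, f 2) := rfl

lemma zigzagShape_card {S : Finset (V × V)} {m : ℕ} {f : ℕ → V} {down : Bool}
    (h : IsZigzagShape S m f down) : S.card = m := by
  rw [h.1]
  rw [Finset.card_image_of_injOn, Finset.card_range]
  intro i hi j hj hij
  exact h.2 i (Finset.mem_range.1 (Finset.mem_coe.1 hi)) j (Finset.mem_range.1 (Finset.mem_coe.1 hj)) hij

lemma shape4_eq {Z : Finset (V × V)} {f : ℕ → V} (hsh : IsZigzagShape Z 4 f true) :
    Z = {(f 0, f 1), (f 2, f 1), (f 2, f 3), (f 4, f 3)} := by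
  rw [hsh.1]
  ext e
  simp only [Finset.mem_image, Finset.mem_range, Finset.mem_insert, Finset.mem_singleton]
  constructor
  · rintro ⟨i, hi, rfl⟩
    interval_cases i <;>
      simp [zigEdge_true_0, zigEdge_true_1, zigEdge_true_2, zigEdge_true_3]
  · rintro (rfl | rfl | rfl | rfl)
    · exact ⟨0, by norm_num, rfl⟩
    · exact ⟨1, by norm_num, rfl⟩
    · exact ⟨2, by norm_num, rfl⟩
    · exact ⟨3, by norm_num, rfl⟩

lemma shape4_ne {Z : Finset (V × V)} {f : ℕ → V} (hsh : IsZigzagShape Z 4 f true)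
    {i j : ℕ} (hi : i < 4) (hj : j < 4) (hij : i ≠ j) :
    zigEdge f true i ≠ zigEdge f true j :=
  fun h => hij (hsh.2 i hi j hj h)

lemma shape4_nes {Z : Finset (V × V)} {f : ℕ → V} (hsh : IsZigzagShape Z 4 f true) :
    (f 0, f 1) ≠ (f 2, f 1) ∧ (f 0, f 1) ≠ (f 2, f 3) ∧ (f 0, f 1) ≠ (f 4, f 3) ∧
    (f 2, f 1) ≠ (f 2, f 3) ∧ (f 2, f 1) ≠ (f 4, f 3) ∧ (f 2, f 3) ≠ (f 4, f 3) := by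
  refine ⟨fun h => ?_, fun h => ?_, fun h => ?_, fun h => ?_, fun h => ?_, fun h => ?_⟩
  · have := hsh.2 0 (by norm_num) 1 (by norm_num)
      (by rw [zigEdge_true_0, zigEdge_true_1]; exact h)
    norm_num at this
  · have := hsh.2 0 (by norm_num) 2 (by norm_num)
      (by rw [zigEdge_true_0, zigEdge_true_2]; exact h)
    norm_num at this
  · have := hsh.2 0 (by norm_num) 3 (by norm_num)
      (by rw [zigEdge_true_0, zigEdge_true_3]; exact h)
    norm_num at this
  · have := hsh.2 1 (by norm_num) 2 (by norm_num)
      (by rw [zigEdge_true_1, zigEdge_true_2]; exact h)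
    norm_num at this
  · have := hsh.2 1 (by norm_num) 3 (by norm_num)
      (by rw [zigEdge_true_1, zigEdge_true_3]; exact h)
    norm_num at this
  · have := hsh.2 2 (by norm_num) 3 (by norm_num)
      (by rw [zigEdge_true_2, zigEdge_true_3]; exact h)
    norm_num at this

lemma out_f0 {E Z : Finset (V × V)} {f : ℕ → V}
    (hmax : IsMaximalZigzagTrail E Z) (hsh : IsZigzagShape Z 4 f true)
    (h40 : f 4 ≠ f 0) : outdeg E (f 0) = 1 := by
  have hZE := hmax.1.1
  have hZeq := shape4_eq hsh
  obtain ⟨ne12, ne13, ne14, ne23, ne24, ne34⟩ := shape4_nes hsh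
  have he1 : (f 0, f 1) ∈ Z := by rw [hZeq]; simp
  have hge : 0 < outdeg E (f 0) := outdeg_pos_of_mem (hZE he1)
  by_contra hne
  have h2 : 1 < outdeg E (f 0) := by omega
  obtain ⟨k, hk, hkne⟩ := Finset.exists_mem_ne h2 (f 0, f 1)
  have hkE : k ∈ E := (Finset.mem_filter.1 hk).1
  have hk1 : k.1 = f 0 := (Finset.mem_filter.1 hk).2
  have hkZ : k ∉ Z := by
    rw [hZeq]
    simp only [Finset.mem_insert, Finset.mem_singleton]
    rintro (rfl | rfl | rfl | rfl)
    · exact hkne rfl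
    · exact ne12 (by have : f 2 = f 0 := hk1; rw [this])
    · exact ne12 (by have : f 2 = f 0 := hk1; rw [this])
    · exact h40 hk1
  have hm1 : (f 0, f 1) ∈ Z := by rw [hZeq]; simp
  have hm2 : (f 2, f 1) ∈ Z := by rw [hZeq]; simp
  have hm3 : (f 2, f 3) ∈ Z := by rw [hZeq]; simp
  have hm4 : (f 4, f 3) ∈ Z := by rw [hZeq]; simp
  have htrail : IsZigzagTrail E (insert k Z) := by
    refine ⟨Finset.insert_subset hkE hZE,
      [k, (f 0, f 1), (f 2, f 1), (f 2, f 3), (f 4, f 3)], by simp, ?_, ?_, ?_⟩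
    · have h1 : k ≠ (f 0, f 1) := hkne
      have h2' : k ≠ (f 2, f 1) := fun h => hkZ (h ▸ hm2)
      have h3' : k ≠ (f 2, f 3) := fun h => hkZ (h ▸ hm3)
      have h4' : k ≠ (f 4, f 3) := fun h => hkZ (h ▸ hm4)
      simp [h1, h2', h3', h4', ne12, ne13, ne14, ne23, ne24, ne34]
    · rw [hZeq]; ext x; simp
    · simp [List.Chain', List.isChain_cons_cons, Shares, hk1]
  exact hmax.2 _ htrail (Finset.ssubset_insert hkZ)

lemma out_f4 {E Z : Finset (V × V)} {f : ℕ → V}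
    (hmax : IsMaximalZigzagTrail E Z) (hsh : IsZigzagShape Z 4 f true)
    (h40 : f 4 ≠ f 0) : outdeg E (f 4) = 1 := by
  have hZE := hmax.1.1
  have hZeq := shape4_eq hsh
  obtain ⟨ne12, ne13, ne14, ne23, ne24, ne34⟩ := shape4_nes hsh
  have he4 : (f 4, f 3) ∈ Z := by rw [hZeq]; simp
  have hge : 0 < outdeg E (f 4) := outdeg_pos_of_mem (hZE he4)
  by_contra hne
  have h2 : 1 < outdeg E (f 4) := by omega
  obtain ⟨k, hk, hkne⟩ := Finset.exists_mem_ne h2 (f 4, f 3)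
  have hkE : k ∈ E := (Finset.mem_filter.1 hk).1
  have hk1 : k.1 = f 4 := (Finset.mem_filter.1 hk).2
  have hkZ : k ∉ Z := by
    rw [hZeq]
    simp only [Finset.mem_insert, Finset.mem_singleton]
    rintro (rfl | rfl | rfl | rfl)
    · exact h40 (by have : f 0 = f 4 := hk1; rw [this])
    · exact ne34 (by have : f 2 = f 4 := hk1; rw [this])
    · exact ne34 (by have : f 2 = f 4 := hk1; rw [this])
    · exact hkne rfl
  have hm1 : (f 0, f 1) ∈ Z := by rw [hZeq]; simp
  have hm2 : (f 2, f 1) ∈ Z := by rw [hZeq]; simp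
  have hm3 : (f 2, f 3) ∈ Z := by rw [hZeq]; simp
  have hm4 : (f 4, f 3) ∈ Z := by rw [hZeq]; simp
  have htrail : IsZigzagTrail E (insert k Z) := by
    refine ⟨Finset.insert_subset hkE hZE,
      [(f 0, f 1), (f 2, f 1), (f 2, f 3), (f 4, f 3), k], by simp, ?_, ?_, ?_⟩
    · have h1 : (f 0, f 1) ≠ k := fun h => hkZ (h ▸ hm1)
      have h2' : (f 2, f 1) ≠ k := fun h => hkZ (h ▸ hm2)
      have h3' : (f 2, f 3) ≠ k := fun h => hkZ (h ▸ hm3)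
      have h4' : (f 4, f 3) ≠ k := fun h => hkZ (h ▸ hm4)
      simp [h1, h2', h3', h4', ne12, ne13, ne14, ne23, ne24, ne34]
    · rw [hZeq]; ext x; simp; tauto
    · simp [List.Chain', List.isChain_cons_cons, Shares, hk1]
  exact hmax.2 _ htrail (Finset.ssubset_insert hkZ)

lemma mfence_struct {T : Finset (V × V)} (hM : IsMFence T) (hc : T.card = 2) :
    ∃ g : ℕ → V, T = {(g 1, g 0), (g 1, g 2)} ∧ g 0 ≠ g 2 := by
  obtain ⟨-, m, g, hm1, hme, hne0, hsh⟩ := hM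
  have hcm := zigzagShape_card hsh
  have hm2 : m = 2 := by omega
  subst hm2
  refine ⟨g, ?_, ?_⟩
  · rw [hsh.1]
    ext e
    simp only [Finset.mem_image, Finset.mem_range, Finset.mem_insert, Finset.mem_singleton]
    constructor
    · rintro ⟨i, hi, rfl⟩
      interval_cases i <;> simp [zigEdge_false_0, zigEdge_false_1]
    · rintro (rfl | rfl)
      · exact ⟨0, by norm_num, rfl⟩
      · exact ⟨1, by norm_num, rfl⟩
  · intro h
    have := hsh.2 0 (by norm_num) 1 (by norm_num)
      (by rw [zigEdge_false_0, zigEdge_false_1, h])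
    norm_num at this

lemma wfence_card4 {E T : Finset (V × V)}
    (htypes : ∀ Z, IsMaximalZigzagTrail E Z →
      (IsWFence Z ∧ Z.card = 4) ∨ (IsMFence Z ∧ Z.card = 2) ∨ (IsNFence Z ∧ Z.card = 1))
    (hmax : IsMaximalZigzagTrail E T) (hWT : IsWFence T) : T.card = 4 := by
  rcases htypes T hmax with ⟨-, h4⟩ | ⟨hM, h2⟩ | ⟨-, h1⟩
  · exact h4
  · exfalso
    obtain ⟨-, m, f, hm1, hme, hne0, hsh⟩ := hWT
    have hcm := zigzagShape_card hsh
    have hm2 : m = 2 := by omega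
    subst hm2
    obtain ⟨g, hTeq, hg02⟩ := mfence_struct hM h2
    have he0 : (f 0, f 1) ∈ T := by
      rw [hsh.1]
      exact Finset.mem_image.2 ⟨0, by simp, rfl⟩
    have he1 : (f 2, f 1) ∈ T := by
      rw [hsh.1]
      exact Finset.mem_image.2 ⟨1, by simp, rfl⟩
    have h02 : f 0 = f 2 := by
      rw [hTeq] at he0 he1
      simp only [Finset.mem_insert, Finset.mem_singleton] at he0 he1
      rcases he0 with h | h <;> rcases he1 with h' | h' <;>
        rw [show f 0 = (f 0, f 1).1 from rfl, show f 2 = (f 2, f 1).1 from rfl, h, h']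
    have := hsh.2 0 (by norm_num) 1 (by norm_num)
      (by rw [zigEdge_true_0, zigEdge_true_1, h02])
    norm_num at this
  · exfalso
    obtain ⟨-, m, f, hm1, hme, hne0, hsh⟩ := hWT
    have hcm := zigzagShape_card hsh
    omega

lemma singleton_max_out {E T : Finset (V × V)} {e : V × V}
    (hmax : IsMaximalZigzagTrail E T) (hTe : T = {e}) : outdeg E e.1 = 1 := by
  have heE : e ∈ E := hmax.1.1 (hTe ▸ Finset.mem_singleton_self e)
  have hge : 0 < outdeg E e.1 := outdeg_pos_of_mem heE
  by_contra hne
  have h2 : 1 < outdeg E e.1 := by omega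
  obtain ⟨k, hk, hkne⟩ := Finset.exists_mem_ne h2 e
  have hkE : k ∈ E := (Finset.mem_filter.1 hk).1
  have hk1 : k.1 = e.1 := (Finset.mem_filter.1 hk).2
  have htrail : IsZigzagTrail E {k, e} := pair_trail hkE heE hkne (Or.inl hk1)
  refine hmax.2 _ htrail ?_
  rw [hTe, show ({k, e} : Finset (V × V)) = insert k {e} from rfl]
  exact Finset.ssubset_insert (by simp [hkne])

lemma mfence_max_indeg {E T : Finset (V × V)}
    (hmax : IsMaximalZigzagTrail E T) (hM : IsMFence T) (hc : T.card = 2) :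
    ∀ h ∈ T, indeg E h.2 = 1 := by
  obtain ⟨g, hTeq, hg02⟩ := mfence_struct hM hc
  have hA : (g 1, g 0) ∈ T := by rw [hTeq]; simp
  have hB : (g 1, g 2) ∈ T := by rw [hTeq]; simp
  have hAB : (g 1, g 0) ≠ (g 1, g 2) := by simp [hg02]
  intro h hh
  rw [hTeq] at hh
  simp only [Finset.mem_insert, Finset.mem_singleton] at hh
  have hAE : (g 1, g 0) ∈ E := hmax.1.1 hA
  have hBE : (g 1, g 2) ∈ E := hmax.1.1 hB
  rcases hh with rfl | rfl
  · show indeg E (g 0) = 1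
    have hge : 0 < indeg E (g 0) := indeg_pos_of_mem hAE
    by_contra hne
    have h2 : 1 < indeg E (g 0) := by omega
    obtain ⟨k, hk, hkne⟩ := Finset.exists_mem_ne h2 (g 1, g 0)
    have hkE : k ∈ E := (Finset.mem_filter.1 hk).1
    have hk2 : k.2 = g 0 := (Finset.mem_filter.1 hk).2
    have hkB : k ≠ (g 1, g 2) := by
      intro h; rw [h] at hk2; exact hg02 (by have : g 2 = g 0 := hk2; rw [this])
    have hkT : k ∉ T := by rw [hTeq]; simp [hkne, hkB]
    have htrail : IsZigzagTrail E (insert k T) := by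
      refine ⟨Finset.insert_subset hkE hmax.1.1, [k, (g 1, g 0), (g 1, g 2)], by simp,
        by simp [hkne, hkB, hAB], by rw [hTeq]; ext x; simp, by simp [List.Chain', List.isChain_cons_cons, Shares, hk2]⟩
    exact hmax.2 _ htrail (Finset.ssubset_insert hkT)
  · show indeg E (g 2) = 1
    have hge : 0 < indeg E (g 2) := indeg_pos_of_mem hBE
    by_contra hne
    have h2 : 1 < indeg E (g 2) := by omega
    obtain ⟨k, hk, hkne⟩ := Finset.exists_mem_ne h2 (g 1, g 2)
    have hkE : k ∈ E := (Finset.mem_filter.1 hk).1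
    have hk2 : k.2 = g 2 := (Finset.mem_filter.1 hk).2
    have hkA : k ≠ (g 1, g 0) := by
      intro h; rw [h] at hk2; exact hg02 (by have : g 0 = g 2 := hk2; rw [this])
    have hkT : k ∉ T := by rw [hTeq]; simp [hkne, hkA]
    have htrail : IsZigzagTrail E (insert k T) := by
      refine ⟨Finset.insert_subset hkE hmax.1.1, [(g 1, g 0), (g 1, g 2), k], by simp,
        ?_, by rw [hTeq]; ext x; simp; tauto, by simp [List.Chain', List.isChain_cons_cons, Shares, hk2]⟩
      simp only [List.nodup_cons, List.mem_cons, List.mem_singleton, List.not_mem_nil, List.nodup_nil]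
      exact ⟨by rintro (h | h | h); exacts [hAB h, hkA h.symm, h], by rintro (h | h); exacts [hkne h.symm, h], by simp, by simp⟩
    exact hmax.2 _ htrail (Finset.ssubset_insert hkT)

lemma mem_X_deg {E : Finset (V × V)} {X : Finset V} (hN : IsPhyloNet E 1 X) {v : V}
    (hv : v ∈ X) : indeg E v = 1 ∧ outdeg E v = 0 := by
  rw [← hN.leaves_eq] at hv
  exact (Finset.mem_filter.1 hv).2

lemma deg_contra {S : Finset (V × V)} {X : Finset V} (hS : IsPhyloNet S 1 X) {v : V}
    (hv : v ∈ verts S) (h0 : outdeg S v = 0) (hvX : v ∉ X) : False := by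
  by_cases hi : indeg S v = 0
  · rcases hS.root_outdeg v hv hi with h | h <;> omega
  · rcases (hS.internal_deg v hv hi hvX).2 with h | h <;> omega

lemma no_new_root {S : Finset (V × V)} {X : Finset V} (hS : IsPhyloNet S 1 X) {r v : V}
    (hr : r ∈ verts S) (hv : v ∈ verts S) (hrv : r ≠ v)
    (h1 : indeg S r = 0) (h2 : indeg S v = 0) : False := by
  have hsub : ({r, v} : Finset V) ⊆ (verts S).filter (fun x => indeg S x = 0) := by
    intro x hx
    simp only [Finset.mem_insert, Finset.mem_singleton] at hx
    rcases hx with rfl | rfl <;> simp [Finset.mem_filter, hr, hv, h1, h2]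
  have hcard : 2 ≤ ((verts S).filter (fun x => indeg S x = 0)).card := by
    calc 2 = ({r, v} : Finset V).card := by
              rw [Finset.card_insert_of_notMem (by simp [hrv]), Finset.card_singleton]
      _ ≤ _ := Finset.card_le_card hsub
  rw [hS.roots_card] at hcard
  omega

lemma exists_root {E : Finset (V × V)} {X : Finset V} (hN : IsPhyloNet E 1 X) :
    ∃ r ∈ verts E, indeg E r = 0 := by
  obtain ⟨r, hr⟩ := Finset.card_eq_one.1 hN.roots_card
  have : r ∈ (verts E).filter (fun v => indeg E v = 0) := hr ▸ Finset.mem_singleton_self r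
  exact ⟨r, (Finset.mem_filter.1 this).1, (Finset.mem_filter.1 this).2⟩

lemma support_missing {E S : Finset (V × V)} {X : Finset V} (hN : IsPhyloNet E 1 X)
    (hS : IsSupportNet E S 1 X) {h : V × V} (hhE : h ∈ E) (hhS : h ∉ S) :
    outdeg E h.1 ≠ 1 ∧ indeg E h.2 ≠ 1 := by
  constructor
  · intro h1
    have hfE : E.filter (fun e => e.1 = h.1) = {h} := by
      obtain ⟨a, ha⟩ := Finset.card_eq_one.1 h1
      have : h ∈ ({a} : Finset (V × V)) := ha ▸ Finset.mem_filter.2 ⟨hhE, rfl⟩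
      rw [ha, Finset.mem_singleton.1 this]
    have hout : outdeg S h.1 = 0 := by
      have hsub : S.filter (fun e => e.1 = h.1) ⊆ {h} :=
        hfE ▸ Finset.filter_subset_filter _ hS.1
      rcases Finset.subset_singleton_iff.1 hsub with he | he
      · rw [outdeg, he]; rfl
      · exfalso
        have : h ∈ S.filter (fun e => e.1 = h.1) := he ▸ Finset.mem_singleton_self h
        exact hhS (Finset.mem_filter.1 this).1
    have hvS : h.1 ∈ verts S := hS.2.1 ▸ mem_verts_iff.2 ⟨h, hhE, Or.inl rfl⟩
    have hX : h.1 ∉ X := fun hx => by have := (mem_X_deg hN hx).2; omega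
    exact deg_contra hS.2.2 hvS hout hX
  · intro h1
    have hfE : E.filter (fun e => e.2 = h.2) = {h} := by
      obtain ⟨a, ha⟩ := Finset.card_eq_one.1 h1
      have : h ∈ ({a} : Finset (V × V)) := ha ▸ Finset.mem_filter.2 ⟨hhE, rfl⟩
      rw [ha, Finset.mem_singleton.1 this]
    have hin : indeg S h.2 = 0 := by
      have hsub : S.filter (fun e => e.2 = h.2) ⊆ {h} :=
        hfE ▸ Finset.filter_subset_filter _ hS.1
      rcases Finset.subset_singleton_iff.1 hsub with he | he
      · rw [indeg, he]; rfl
      · exfalso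
        have : h ∈ S.filter (fun e => e.2 = h.2) := he ▸ Finset.mem_singleton_self h
        exact hhS (Finset.mem_filter.1 this).1
    obtain ⟨r, hrv, hr0⟩ := exists_root hN
    have hrS : indeg S r = 0 := by
      have := indeg_le_of_subset hS.1 r
      omega
    have hrvS : r ∈ verts S := hS.2.1 ▸ hrv
    have hvS : h.2 ∈ verts S := hS.2.1 ▸ mem_verts_iff.2 ⟨h, hhE, Or.inr rfl⟩
    have hrh : r ≠ h.2 := fun he => by rw [he] at hr0; omega
    exact no_new_root hS.2.2 hrvS hvS hrh hrS hin

lemma retic_mem {E Z : Finset (V × V)} {f : ℕ → V}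
    (htypes : ∀ T, IsMaximalZigzagTrail E T →
      (IsWFence T ∧ T.card = 4) ∨ (IsMFence T ∧ T.card = 2) ∨ (IsNFence T ∧ T.card = 1))
    (hWuniq : ∀ T, IsMaximalZigzagTrail E T → IsWFence T → T = Z)
    (hsh : IsZigzagShape Z 4 f true)
    {g h : V × V} (hg : g ∈ E) (hh : h ∈ E) (hgh : g ≠ h) (h2 : g.2 = h.2) :
    g.2 = f 1 ∨ g.2 = f 3 := by
  have hZeq := shape4_eq hsh
  obtain ⟨T, hTmax, hTsub⟩ := exists_maximal_trail (pair_trail hg hh hgh (Or.inr h2))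
  have hgT : g ∈ T := hTsub (by simp)
  have hhT : h ∈ T := hTsub (by simp)
  rcases htypes T hTmax with ⟨hWT, -⟩ | ⟨hMT, hcT⟩ | ⟨-, hcT⟩
  · have hTZ := hWuniq T hTmax hWT
    rw [hTZ, hZeq] at hgT
    simp only [Finset.mem_insert, Finset.mem_singleton] at hgT
    rcases hgT with rfl | rfl | rfl | rfl
    · exact Or.inl rfl
    · exact Or.inl rfl
    · exact Or.inr rfl
    · exact Or.inr rfl
  · exfalso
    obtain ⟨a, hTeq, ha02⟩ := mfence_struct hMT hcT
    rw [hTeq] at hgT hhT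
    simp only [Finset.mem_insert, Finset.mem_singleton] at hgT hhT
    rcases hgT with rfl | rfl <;> rcases hhT with rfl | rfl
    · exact hgh rfl
    · exact ha02 h2
    · exact ha02 h2.symm
    · exact hgh rfl
  · exfalso
    obtain ⟨a, hTeq⟩ := Finset.card_eq_one.1 hcT
    rw [hTeq, Finset.mem_singleton] at hgT hhT
    exact hgh (hgT.trans hhT.symm)

lemma edge_forced {E Z : Finset (V × V)} {f : ℕ → V}
    (htypes : ∀ T, IsMaximalZigzagTrail E T →
      (IsWFence T ∧ T.card = 4) ∨ (IsMFence T ∧ T.card = 2) ∨ (IsNFence T ∧ T.card = 1))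
    (hWuniq : ∀ T, IsMaximalZigzagTrail E T → IsWFence T → T = Z)
    (hmaxZ : IsMaximalZigzagTrail E Z) (hsh : IsZigzagShape Z 4 f true)
    (h40 : f 4 ≠ f 0) {h : V × V} (hhE : h ∈ E)
    (hne2 : h ≠ (f 2, f 1)) (hne3 : h ≠ (f 2, f 3)) :
    outdeg E h.1 = 1 ∨ indeg E h.2 = 1 := by
  have hZeq := shape4_eq hsh
  obtain ⟨T, hTmax, hTsub⟩ := exists_maximal_trail (singleton_trail hhE)
  have hhT : h ∈ T := hTsub (Finset.mem_singleton_self h)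
  rcases htypes T hTmax with ⟨hWT, -⟩ | ⟨hMT, hcT⟩ | ⟨-, hcT⟩
  · have hTZ := hWuniq T hTmax hWT
    rw [hTZ, hZeq] at hhT
    simp only [Finset.mem_insert, Finset.mem_singleton] at hhT
    rcases hhT with rfl | rfl | rfl | rfl
    · exact Or.inl (out_f0 hmaxZ hsh h40)
    · exact absurd rfl hne2
    · exact absurd rfl hne3
    · exact Or.inl (out_f4 hmaxZ hsh h40)
  · exact Or.inr (mfence_max_indeg hTmax hMT hcT h hhT)
  · obtain ⟨a, hTeq⟩ := Finset.card_eq_one.1 hcT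
    have hha : h = a := by rw [hTeq, Finset.mem_singleton] at hhT; exact hhT
    exact Or.inl (singleton_max_out hTmax (by rw [hTeq, hha]))

lemma support_erase {E : Finset (V × V)} {X : Finset V} (hN : IsPhyloNet E 1 X)
    {e : V × V} (heE : e ∈ E) (hin : indeg E e.2 = 2) (hout : outdeg E e.1 = 2) :
    IsSupportNet E (E.erase e) 1 X := by
  set S := E.erase e with hSdef
  have hSE : S ⊆ E := Finset.erase_subset e E
  have heE' : (e.1, e.2) ∈ E := by rwa [Prod.mk.eta]
  have hab : e.1 ≠ e.2 := by
    intro h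
    rw [h] at heE'
    exact hN.acyclic e.2 (Relation.TransGen.single heE')
  have haX : e.1 ∉ X := fun hx => by have := (mem_X_deg hN hx).2; omega
  have hbX : e.2 ∉ X := fun hx => by have := (mem_X_deg hN hx).1; omega
  have haV : e.1 ∈ verts E := mem_verts_iff.2 ⟨e, heE, Or.inl rfl⟩
  have hbV : e.2 ∈ verts E := mem_verts_iff.2 ⟨e, heE, Or.inr rfl⟩
  have houtb : outdeg E e.2 = 1 ∨ outdeg E e.2 = 2 :=
    (hN.internal_deg e.2 hbV (by omega) hbX).2
  -- another in-edge of e.2 and out-edge of e.1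
  obtain ⟨k, hk, hkne⟩ := Finset.exists_mem_ne (by rw [show (E.filter (fun x => x.2 = e.2)).card = indeg E e.2 from rfl]; omega) e
  have hkE : k ∈ E := (Finset.mem_filter.1 hk).1
  have hk2 : k.2 = e.2 := (Finset.mem_filter.1 hk).2
  have hkS : k ∈ S := Finset.mem_erase.2 ⟨hkne, hkE⟩
  obtain ⟨k', hk', hkne'⟩ := Finset.exists_mem_ne (by rw [show (E.filter (fun x => x.1 = e.1)).card = outdeg E e.1 from rfl]; omega) e
  have hkE' : k' ∈ E := (Finset.mem_filter.1 hk').1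
  have hk1' : k'.1 = e.1 := (Finset.mem_filter.1 hk').2
  have hkS' : k' ∈ S := Finset.mem_erase.2 ⟨hkne', hkE'⟩
  -- degree computations
  have hinb : indeg S e.2 = 1 := by rw [hSdef, indeg_erase_of_head heE, hin]
  have houta : outdeg S e.1 = 1 := by rw [hSdef, outdeg_erase_of_tail heE, hout]
  have hind : ∀ v, v ≠ e.2 → indeg S v = indeg E v := fun v hv =>
    indeg_erase_of_ne (fun h => hv h.symm)
  have houtd : ∀ v, v ≠ e.1 → outdeg S v = outdeg E v := fun v hv =>
    outdeg_erase_of_ne (fun h => hv h.symm)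
  have hverts : verts S = verts E := by
    apply Finset.Subset.antisymm
    · intro v hv
      obtain ⟨x, hx, hc⟩ := mem_verts_iff.1 hv
      exact mem_verts_iff.2 ⟨x, hSE hx, hc⟩
    · intro v hv
      obtain ⟨x, hx, hc⟩ := mem_verts_iff.1 hv
      by_cases hxe : x = e
      · subst hxe
        rcases hc with rfl | rfl
        · exact mem_verts_iff.2 ⟨k', hkS', Or.inl hk1'⟩
        · exact mem_verts_iff.2 ⟨k, hkS, Or.inr hk2⟩
      · exact mem_verts_iff.2 ⟨x, Finset.mem_erase.2 ⟨hxe, hx⟩, hc⟩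
  refine ⟨hSE, hverts, ?_, ?_, ?_, ?_, ?_⟩
  · -- acyclic
    intro v hv
    exact hN.acyclic v (Relation.TransGen.mono (fun a b hab' => Finset.mem_of_mem_erase hab') _ _ hv)
  · -- roots_card
    rw [hverts]
    have : (verts E).filter (fun v => indeg S v = 0) = (verts E).filter (fun v => indeg E v = 0) := by
      apply Finset.filter_congr
      intro v _
      by_cases hv : v = e.2
      · subst hv; rw [hinb]; simp; omega
      · rw [hind v hv]
    rw [this, hN.roots_card]
  · -- root_outdeg
    intro v hv h0
    have hvE : v ∈ verts E := hverts ▸ hv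
    have hvne : v ≠ e.2 := fun h => by rw [h, hinb] at h0; omega
    have h0E : indeg E v = 0 := by rw [← hind v hvne]; exact h0
    by_cases hva : v = e.1
    · subst hva; rw [houta]; left; rfl
    · rw [houtd v hva]; exact hN.root_outdeg v hvE h0E
  · -- leaves_eq
    rw [hverts, ← hN.leaves_eq]
    apply Finset.filter_congr
    intro v hvE
    by_cases hvb : v = e.2
    · subst hvb
      have hob : outdeg S e.2 = outdeg E e.2 := houtd e.2 (fun h => hab h.symm)
      constructor
      · rintro ⟨-, h0⟩; rw [hob] at h0; omega
      · rintro ⟨h1, -⟩; omega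
    · by_cases hva : v = e.1
      · subst hva
        constructor
        · rintro ⟨-, h0⟩; rw [houta] at h0; omega
        · rintro ⟨-, h0⟩; omega
      · rw [hind v hvb, houtd v hva]
  · -- internal_deg
    intro v hv hi hX
    have hvE : v ∈ verts E := hverts ▸ hv
    by_cases hvb : v = e.2
    · subst hvb
      refine ⟨Or.inl hinb, ?_⟩
      rw [houtd e.2 (fun h => hab h.symm)]
      exact houtb
    · by_cases hva : v = e.1
      · subst hva
        refine ⟨?_, Or.inl houta⟩
        rw [hind e.1 hab]
        have hiE : indeg E e.1 ≠ 0 := by rw [← hind e.1 hab]; exact hi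
        exact (hN.internal_deg e.1 hvE hiE hX).1
      · rw [hind v hvb, houtd v hva]
        have hiE : indeg E v ≠ 0 := by rw [← hind v hvb]; exact hi
        exact hN.internal_deg v hvE hiE hX

/-- A rooted almost-binary phylogenetic network whose maximal zig-zag trail decomposition
consists of exactly one W-fence of length 4 together with M-fences of length 2 and
N-fences of length 1 has exactly two minimal support networks, each with exactly one
reticulation. -/
theorem stmt18 (X : Finset V) (hX : X.Nonempty)
    (E : Finset (V × V)) (hN : IsPhyloNet E 1 X)
    (htypes : ∀ Z, IsMaximalZigzagTrail E Z →
      (IsWFence Z ∧ Z.card = 4) ∨ (IsMFence Z ∧ Z.card = 2) ∨ (IsNFence Z ∧ Z.card = 1))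
    (hW : ∃! Z, IsMaximalZigzagTrail E Z ∧ IsWFence Z) :
    Set.ncard {S | IsMinimalSupportNet E S 1 X} = 2 ∧
    ∀ S, IsMinimalSupportNet E S 1 X →
      ((verts S).filter fun v => indeg S v = 2).card = 1 := by
  classical
  obtain ⟨Z, ⟨hZmax, hZW⟩, hZuniq⟩ := hW
  have hWuniq : ∀ T, IsMaximalZigzagTrail E T → IsWFence T → T = Z :=
    fun T h1 h2 => hZuniq T ⟨h1, h2⟩
  have hc4 : Z.card = 4 := wfence_card4 htypes hZmax hZW
  obtain ⟨m, f, hm1, hme, hne0, hsh⟩ := hZW.2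
  have hm4 : m = 4 := by have := zigzagShape_card hsh; omega
  subst hm4
  have h40 : f 4 ≠ f 0 := hne0
  have hZeq := shape4_eq hsh
  obtain ⟨ne12, ne13, ne14, ne23, ne24, ne34⟩ := shape4_nes hsh
  have hZE := hZmax.1.1
  have he1E : (f 0, f 1) ∈ E := hZE (by rw [hZeq]; simp)
  have he2E : (f 2, f 1) ∈ E := hZE (by rw [hZeq]; simp)
  have he3E : (f 2, f 3) ∈ E := hZE (by rw [hZeq]; simp)
  have he4E : (f 4, f 3) ∈ E := hZE (by rw [hZeq]; simp)
  have hf13 : f 1 ≠ f 3 := fun h => ne23 (by rw [h])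
  have hf1V : f 1 ∈ verts E := mem_verts_iff.2 ⟨(f 0, f 1), he1E, Or.inr rfl⟩
  have hf3V : f 3 ∈ verts E := mem_verts_iff.2 ⟨(f 4, f 3), he4E, Or.inr rfl⟩
  have hf2V : f 2 ∈ verts E := mem_verts_iff.2 ⟨(f 2, f 1), he2E, Or.inl rfl⟩
  have hin1 : indeg E (f 1) = 2 := by
    have hge : 2 ≤ indeg E (f 1) := two_le_indeg he1E he2E ne12 rfl
    have hX1 : f 1 ∉ X := fun hx => by have := (mem_X_deg hN hx).1; omega
    have := (hN.internal_deg (f 1) hf1V (by omega) hX1).1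
    omega
  have hin3 : indeg E (f 3) = 2 := by
    have hge : 2 ≤ indeg E (f 3) := two_le_indeg he3E he4E ne34 rfl
    have hX3 : f 3 ∉ X := fun hx => by have := (mem_X_deg hN hx).1; omega
    have := (hN.internal_deg (f 3) hf3V (by omega) hX3).1
    omega
  have hout2 : outdeg E (f 2) = 2 := by
    have hge : 2 ≤ outdeg E (f 2) := two_le_outdeg he2E he3E ne23 rfl
    have hX2 : f 2 ∉ X := fun hx => by have := (mem_X_deg hN hx).2; omega
    by_cases hi : indeg E (f 2) = 0
    · have := hN.root_outdeg (f 2) hf2V hi; omega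
    · have := (hN.internal_deg (f 2) hf2V hi hX2).2; omega
  have hS2 : IsSupportNet E (E.erase (f 2, f 1)) 1 X := support_erase hN he2E hin1 hout2
  have hS3 : IsSupportNet E (E.erase (f 2, f 3)) 1 X := support_erase hN he3E hin3 hout2
  have hclass : ∀ S, IsSupportNet E S 1 X →
      S = E ∨ S = E.erase (f 2, f 1) ∨ S = E.erase (f 2, f 3) := by
    intro S hS
    have hmiss : ∀ h ∈ E, h ∉ S → h = (f 2, f 1) ∨ h = (f 2, f 3) := by
      intro h hhE hhS
      by_contra hcon
      push_neg at hcon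
      obtain ⟨hO, hI⟩ := support_missing hN hS hhE hhS
      rcases edge_forced htypes hWuniq hZmax hsh h40 hhE hcon.1 hcon.2 with h1 | h1
      · exact hO h1
      · exact hI h1
    have hnotboth : (f 2, f 1) ∈ S ∨ (f 2, f 3) ∈ S := by
      by_contra hcon
      push_neg at hcon
      have hfe : E.filter (fun x => x.1 = f 2) = {(f 2, f 1), (f 2, f 3)} := by
        symm
        apply Finset.eq_of_subset_of_card_le
        · intro x hx
          simp only [Finset.mem_insert, Finset.mem_singleton] at hx
          rcases hx with rfl | rfl <;> simp [Finset.mem_filter, he2E, he3E]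
        · rw [show (E.filter (fun x => x.1 = f 2)).card = outdeg E (f 2) from rfl, hout2]
          rw [Finset.card_insert_of_notMem (by simp [ne23]), Finset.card_singleton]
      have hout0 : outdeg S (f 2) = 0 := by
        rw [outdeg, Finset.card_eq_zero]
        ext x
        simp only [Finset.mem_filter, Finset.notMem_empty, iff_false, not_and]
        intro hxS hx1
        have hx : x ∈ E.filter (fun x => x.1 = f 2) := Finset.mem_filter.2 ⟨hS.1 hxS, hx1⟩
        rw [hfe] at hx
        simp only [Finset.mem_insert, Finset.mem_singleton] at hx
        rcases hx with rfl | rfl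
        · exact hcon.1 hxS
        · exact hcon.2 hxS
      have hX2 : f 2 ∉ X := fun hx => by have := (mem_X_deg hN hx).2; omega
      exact deg_contra hS.2.2 (hS.2.1 ▸ hf2V) hout0 hX2
    by_cases h2S : (f 2, f 1) ∈ S <;> by_cases h3S : (f 2, f 3) ∈ S
    · left
      apply Finset.Subset.antisymm hS.1
      intro x hxE
      by_contra hxS
      rcases hmiss x hxE hxS with rfl | rfl
      · exact hxS h2S
      · exact hxS h3S
    · right; right
      ext x
      rw [Finset.mem_erase]
      constructor
      · intro hxS
        exact ⟨fun h => h3S (h ▸ hxS), hS.1 hxS⟩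
      · rintro ⟨hxne, hxE⟩
        by_contra hxS
        rcases hmiss x hxE hxS with rfl | rfl
        · exact hxS h2S
        · exact hxne rfl
    · right; left
      ext x
      rw [Finset.mem_erase]
      constructor
      · intro hxS
        exact ⟨fun h => h2S (h ▸ hxS), hS.1 hxS⟩
      · rintro ⟨hxne, hxE⟩
        by_contra hxS
        rcases hmiss x hxE hxS with rfl | rfl
        · exact hxne rfl
        · exact hxS h3S
    · rcases hnotboth with h | h
      · exact absurd h h2S
      · exact absurd h h3S
  have hmin2 : IsMinimalSupportNet E (E.erase (f 2, f 1)) 1 X := by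
    refine ⟨hS2, fun S' hS' hss => ?_⟩
    rcases hclass S' hS' with rfl | rfl | rfl
    · exact Finset.notMem_erase _ _ ((Finset.ssubset_def.1 hss).1 he2E)
    · exact lt_irrefl _ hss
    · have h3 : (f 2, f 1) ∈ E.erase (f 2, f 1) :=
        (Finset.ssubset_def.1 hss).1 (Finset.mem_erase.2 ⟨ne23, he2E⟩)
      exact Finset.notMem_erase _ _ h3
  have hmin3 : IsMinimalSupportNet E (E.erase (f 2, f 3)) 1 X := by
    refine ⟨hS3, fun S' hS' hss => ?_⟩
    rcases hclass S' hS' with rfl | rfl | rfl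
    · exact Finset.notMem_erase _ _ ((Finset.ssubset_def.1 hss).1 he3E)
    · have h3 : (f 2, f 3) ∈ E.erase (f 2, f 3) :=
        (Finset.ssubset_def.1 hss).1 (Finset.mem_erase.2 ⟨fun h => ne23 h.symm, he3E⟩)
      exact Finset.notMem_erase _ _ h3
    · exact lt_irrefl _ hss
  have hset : {S | IsMinimalSupportNet E S 1 X} =
      ({E.erase (f 2, f 1), E.erase (f 2, f 3)} : Set (Finset (V × V))) := by
    ext S
    simp only [Set.mem_setOf_eq, Set.mem_insert_iff, Set.mem_singleton_iff]
    constructor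
    · intro hS
      rcases hclass S hS.1 with rfl | rfl | rfl
      · exact absurd (Finset.erase_ssubset he2E) (hS.2 _ hS2)
      · exact Or.inl rfl
      · exact Or.inr rfl
    · rintro (rfl | rfl)
      · exact hmin2
      · exact hmin3
  have hnepair : E.erase (f 2, f 1) ≠ E.erase (f 2, f 3) := by
    intro h
    have h3 : (f 2, f 3) ∈ E.erase (f 2, f 1) :=
      Finset.mem_erase.2 ⟨fun h' => ne23 h'.symm, he3E⟩
    rw [h] at h3
    exact Finset.notMem_erase _ _ h3
  constructor
  · rw [hset]
    exact Set.ncard_pair hnepair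
  · intro S hS
    have hSc := hclass S hS.1
    rcases hSc with rfl | rfl | rfl
    · exact absurd (Finset.erase_ssubset he2E) (hS.2 _ hS2)
    · -- S = E.erase (f 2, f 1); reticulation is f 3
      have hfilt : (verts (E.erase (f 2, f 1))).filter
          (fun v => indeg (E.erase (f 2, f 1)) v = 2) = {f 3} := by
        ext v
        simp only [Finset.mem_filter, Finset.mem_singleton]
        constructor
        · rintro ⟨hv, hdeg⟩
          have hle : 2 ≤ indeg E v := by
            have := indeg_le_of_subset (Finset.erase_subset ((f 2, f 1) : V × V) E) v; omega
          obtain ⟨a, ha, b, hb, hab⟩ := Finset.one_lt_card.1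
            (by rw [show (E.filter (fun x => x.2 = v)).card = indeg E v from rfl]; omega :
              1 < (E.filter (fun x => x.2 = v)).card)
          have haE : a ∈ E := (Finset.mem_filter.1 ha).1
          have ha2 : a.2 = v := (Finset.mem_filter.1 ha).2
          have hbE : b ∈ E := (Finset.mem_filter.1 hb).1
          have hb2 : b.2 = v := (Finset.mem_filter.1 hb).2
          have hvm := retic_mem htypes hWuniq hsh haE hbE hab (ha2.trans hb2.symm)
          rw [ha2] at hvm
          rcases hvm with rfl | rfl
          · exfalso
            have h1 : indeg (E.erase (f 2, f 1)) (f 1) = indeg E (f 1) - 1 :=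
              indeg_erase_of_head he2E
            rw [hin1] at h1
            omega
          · rfl
        · rintro rfl
          refine ⟨hS2.2.1 ▸ hf3V, ?_⟩
          have h1 : indeg (E.erase (f 2, f 1)) (f 3) = indeg E (f 3) :=
            indeg_erase_of_ne hf13
          rw [h1, hin3]
      rw [hfilt, Finset.card_singleton]
    · -- S = E.erase (f 2, f 3); reticulation is f 1
      have hfilt : (verts (E.erase (f 2, f 3))).filter
          (fun v => indeg (E.erase (f 2, f 3)) v = 2) = {f 1} := by
        ext v
        simp only [Finset.mem_filter, Finset.mem_singleton]
        constructor
        · rintro ⟨hv, hdeg⟩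
          have hle : 2 ≤ indeg E v := by
            have := indeg_le_of_subset (Finset.erase_subset ((f 2, f 3) : V × V) E) v; omega
          obtain ⟨a, ha, b, hb, hab⟩ := Finset.one_lt_card.1
            (by rw [show (E.filter (fun x => x.2 = v)).card = indeg E v from rfl]; omega :
              1 < (E.filter (fun x => x.2 = v)).card)
          have haE : a ∈ E := (Finset.mem_filter.1 ha).1
          have ha2 : a.2 = v := (Finset.mem_filter.1 ha).2
          have hbE : b ∈ E := (Finset.mem_filter.1 hb).1
          have hb2 : b.2 = v := (Finset.mem_filter.1 hb).2
          have hvm := retic_mem htypes hWuniq hsh haE hbE hab (ha2.trans hb2.symm)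
          rw [ha2] at hvm
          rcases hvm with rfl | rfl
          · rfl
          · exfalso
            have h1 : indeg (E.erase (f 2, f 3)) (f 3) = indeg E (f 3) - 1 :=
              indeg_erase_of_head he3E
            rw [hin3] at h1
            omega
        · rintro rfl
          refine ⟨hS3.2.1 ▸ hf1V, ?_⟩
          have h1 : indeg (E.erase (f 2, f 3)) (f 1) = indeg E (f 1) :=
            indeg_erase_of_ne (fun h => hf13 h.symm)
          rw [h1, hin1]
      rw [hfilt, Finset.card_singleton]
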